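/- Let E/F be a degree-n extension of finite fields of odd characteristic, and let τ ∈ Gal(E/F) satisfy τ² = 1. Let Δ be the determinant of the F-bilinear form on E given by (t₁, t₂) ↦ Tr_{E/F}(t₁·τ(t₂)) (with respect to any F-basis of E). Then sgn_F(Δ) = (−sgn_F(sgn_{Gal(E/F)}(τ)))^{n+1}, where sgn_F is the unique quadratic character of F× (extended by sgn_F of a square class being well-defined since Δ is determined up to squares), and sgn_{Gal(E/F)} is the unique character of the cyclic group Gal(E/F) whose kernel is the subgroup of squares. -/

import Mathlib

open scoped Classical

lemma algEquiv_pow_apply {F E : Type*} [Field F] [Field E] [Algebra F E]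
    (φ : E ≃ₐ[F] E) (q : ℕ) (hφ : ∀ x : E, φ x = x ^ q) :
    ∀ (k : ℕ) (x : E), (φ ^ k) x = x ^ q ^ k := by
  intro k
  induction k with
  | zero => intro x; simp
  | succ k ih =>
    intro x
    rw [pow_succ', AlgEquiv.mul_apply, hφ, ih, ← pow_mul, ← pow_succ]

lemma mulRight_pow_eq {G : Type*} [Group G] (g : G) (k : ℕ) :
    Equiv.mulRight (g ^ k) = (Equiv.mulRight g) ^ k := by
  induction k with
  | zero => ext x; simp
  | succ k ih =>
    ext x
    simp only [pow_succ, Equiv.Perm.mul_apply, ← ih, Equiv.coe_mulRight]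
    rw [mul_assoc, ← pow_succ, ← pow_succ']

lemma sign_mulRight_gen {G : Type*} [Group G] [Fintype G] [DecidableEq G] (g : G)
    (hgen : ∀ h : G, ∃ k : ℕ, h = g ^ k) :
    (Equiv.Perm.sign (Equiv.mulRight g) : ℤ) = (-1) ^ (Fintype.card G + 1) := by
  by_cases hg : g = 1
  · have hG : ∀ h : G, h = 1 := fun h => by obtain ⟨k, hk⟩ := hgen h; simp [hk, hg]
    have hcard : Fintype.card G = 1 :=
      Fintype.card_eq_one_iff.mpr ⟨1, fun h => hG h⟩
    have h1 : Equiv.mulRight g = (1 : Equiv.Perm G) := by ext x; simp [hg]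
    rw [h1, hcard]
    simp
  · have hc : (Equiv.mulRight g).IsCycle := by
      refine ⟨1, by simpa using hg, ?_⟩
      intro y _
      obtain ⟨k, hk⟩ := hgen y
      refine ⟨(k : ℤ), ?_⟩
      rw [zpow_natCast, ← mulRight_pow_eq]
      simp [hk]
    have hsupp : (Equiv.mulRight g).support = Finset.univ := by
      ext x
      simp only [Equiv.Perm.mem_support, Finset.mem_univ, iff_true, Equiv.coe_mulRight]
      intro h
      exact hg (by simpa using h)
    have hs := hc.sign
    rw [hsupp, Finset.card_univ] at hs
    rw [hs]
    push_cast
    rw [pow_succ]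
    ring

lemma algEquiv_pow_apply' {F E : Type*} [Field F] [Field E] [Algebra F E]
    (φ : E ≃ₐ[F] E) (q : ℕ) (hφ : ∀ x : E, φ x = x ^ q) :
    ∀ (k : ℕ) (x : E), (φ ^ k) x = x ^ q ^ k := by
  intro k
  induction k with
  | zero => intro x; simp
  | succ k ih =>
    intro x
    rw [pow_succ', AlgEquiv.mul_apply, hφ, ih, ← pow_mul, ← pow_succ]

lemma exists_frobenius_gen (F E : Type*) [Field F] [Field E] [Fintype F] [Fintype E]
    [Algebra F E] (p : ℕ) [Fact p.Prime] [CharP F p] :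
    ∃ φ : E ≃ₐ[F] E, (∀ x : E, φ x = x ^ Fintype.card F) ∧
      (φ ^ Module.finrank F E = 1) ∧
      ∀ g : E ≃ₐ[F] E, ∃ k : ℕ, g = φ ^ k := by
  haveI : CharP E p := charP_of_injective_algebraMap (algebraMap F E).injective p
  obtain ⟨f, hpp, hf⟩ := FiniteField.card F p
  set q := Fintype.card F with hq
  have hq1 : 1 < q := Fintype.one_lt_card
  let ψ : E →ₐ[F] E :=
    { toRingHom := iterateFrobenius E p (f:ℕ)
      commutes' := fun a => by
        show (algebraMap F E a) ^ p ^ (f:ℕ) = algebraMap F E a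
        rw [← map_pow, ← hf, hq, FiniteField.pow_card] }
  have hbij : Function.Bijective ψ :=
    Finite.injective_iff_bijective.mp ψ.toRingHom.injective
  set φ := AlgEquiv.ofBijective ψ hbij with hφdef
  have hφ : ∀ x : E, φ x = x ^ q := fun x => by
    show iterateFrobenius E p (f:ℕ) x = x ^ q
    rw [iterateFrobenius_def, hf]
  refine ⟨φ, hφ, ?_⟩
  · set n := Module.finrank F E with hn
    have npos : 0 < n := Module.finrank_pos
    have hcardE : Fintype.card E = q ^ n := by
      have := Module.card_fintype (Module.finBasis F E)
      simpa [hq] using this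
    have hφn : φ ^ n = 1 := by
      apply AlgEquiv.ext
      intro x
      rw [algEquiv_pow_apply' φ q hφ n x, ← hcardE, FiniteField.pow_card]
      rfl
    refine ⟨hφn, ?_⟩
    have hdvd : orderOf φ ∣ n := orderOf_dvd_of_pow_eq_one hφn
    have hle : n ≤ orderOf φ := by
      by_contra hlt
      push_neg at hlt
      set m := orderOf φ with hm
      have hm0 : 0 < m := orderOf_pos φ
      have hfix : ∀ x : E, x ^ q ^ m = x := by
        intro x
        have h1 := pow_orderOf_eq_one φ
        have h2 := congrArg (fun (ψ' : E ≃ₐ[F] E) => ψ' x) h1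
        rw [algEquiv_pow_apply' φ q hφ m x] at h2
        exact h2
      have hcardle : Fintype.card E ≤ q ^ m := by
        set P : Polynomial E := Polynomial.X ^ q ^ m - Polynomial.X with hP
        have hq2 : 2 ≤ q ^ m := by
          calc 2 ≤ q := hq1
          _ = q ^ 1 := (pow_one q).symm
          _ ≤ q ^ m := Nat.pow_le_pow_right (le_of_lt hq1) hm0
        have hPdeg : P.natDegree = q ^ m := by
          rw [hP, Polynomial.natDegree_sub_eq_left_of_natDegree_lt, Polynomial.natDegree_X_pow]
          rw [Polynomial.natDegree_X_pow, Polynomial.natDegree_X]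
          omega
        have hP0 : P ≠ 0 := by
          intro h0
          rw [h0, Polynomial.natDegree_zero] at hPdeg
          omega
        have hroots : ∀ x : E, x ∈ P.roots := by
          intro x
          rw [Polynomial.mem_roots hP0]
          simp [hP, Polynomial.IsRoot, sub_eq_zero, hfix x]
        calc Fintype.card E = Finset.univ.card := Finset.card_univ.symm
          _ ≤ P.roots.toFinset.card :=
              Finset.card_le_card (fun x _ => Multiset.mem_toFinset.mpr (hroots x))
          _ ≤ Multiset.card P.roots := P.roots.toFinset_card_le
          _ ≤ P.natDegree := P.card_roots'
          _ = q ^ m := hPdeg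
      rw [hcardE] at hcardle
      have := (Nat.pow_le_pow_iff_right hq1).mp hcardle
      omega
    have horder : orderOf φ = n := le_antisymm (Nat.le_of_dvd npos hdvd) hle
    intro g
    have htop : Subgroup.zpowers φ = ⊤ := by
      apply Subgroup.eq_top_of_card_eq
      rw [Nat.card_zpowers, horder, IsGalois.card_aut_eq_finrank]
    have hg : g ∈ Subgroup.zpowers φ := htop ▸ Subgroup.mem_top g
    rw [← mem_powers_iff_mem_zpowers] at hg
    obtain ⟨k, hk⟩ := hg
    exact ⟨k, hk.symm⟩

theorem stmt_0 (F E : Type*) [Field F] [Field E] [Fintype F] [Fintype E]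
    [Algebra F E] (p : ℕ) [Fact p.Prime] (hp : Odd p) [CharP F p]
    (n : ℕ) (hn : Module.finrank F E = n)
    (τ : E ≃ₐ[F] E) (hτ : τ * τ = 1)
    (b : Module.Basis (Fin n) F E)
    (Δ : F)
    (hΔ : Δ = Matrix.det (Matrix.of fun i j : Fin n =>
      Algebra.trace F E (b i * τ (b j))))
    (sgnF : F → ℤ)
    (hsgnF : ∀ a : F, a ≠ 0 → sgnF a = if IsSquare a then 1 else -1)
    (sgnGal : (E ≃ₐ[F] E) → ℤ)
    (hsgnGal : ∀ g : E ≃ₐ[F] E, sgnGal g = if IsSquare g then 1 else -1) :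
    sgnF Δ = (-(sgnF ((sgnGal τ : ℤ) : F))) ^ (n + 1) := by
  classical
  have hq1 : 1 < Fintype.card F := Fintype.one_lt_card
  set q := Fintype.card F with hq
  obtain ⟨f, hpp, hfcard⟩ := FiniteField.card F p
  have hqodd : Odd q := by rw [hq, hfcard]; exact hp.pow
  haveI : CharP E p := charP_of_injective_algebraMap (algebraMap F E).injective p
  have hp2 : p ≠ 2 := by rintro rfl; exact (by norm_num : ¬ Odd 2) hp
  have hcharF2 : ringChar F ≠ 2 := by rw [ringChar.eq F p]; exact hp2
  have hne11 : (-1 : E) ≠ 1 :=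
    Ring.neg_one_ne_one_of_char_ne_two (by rw [ringChar.eq E p]; exact hp2)
  have hne11F : (-1 : F) ≠ 1 :=
    Ring.neg_one_ne_one_of_char_ne_two (by rw [ringChar.eq F p]; exact hp2)
  obtain ⟨φ, hφ, hφfr, hgen⟩ := exists_frobenius_gen F E p
  have hφn : φ ^ n = 1 := by rw [← hn]; exact hφfr
  have hcardGal : Fintype.card (E ≃ₐ[F] E) = n := by
    rw [← Nat.card_eq_fintype_card, IsGalois.card_aut_eq_finrank, hn]
  have npos : 0 < n := hn ▸ Module.finrank_pos
  let e : Fin n ≃ (E ≃ₐ[F] E) := (Fintype.equivFinOfCardEq hcardGal).symm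
  set A : Matrix (Fin n) (Fin n) E := Matrix.of (fun i j => (e j) (b i)) with hA
  set d := A.det with hd
  have key : ∀ g : E ≃ₐ[F] E,
      algebraMap F E (Matrix.det (Matrix.of fun i j : Fin n =>
        Algebra.trace F E (b i * g (b j))))
      = ((Equiv.Perm.sign (Equiv.mulRight g) : ℤ) : E) * d ^ 2 := by
    intro g
    set π : Equiv.Perm (Fin n) := e.symm.permCongr (Equiv.mulRight g) with hπdef
    have hπ : ∀ k, e (π k) = e k * g := fun k => by
      simp [hπdef, Equiv.permCongr_apply]
    have hmap : (Matrix.of fun i j : Fin n =>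
          Algebra.trace F E (b i * g (b j))).map (algebraMap F E)
        = A * (A.submatrix id π).transpose := by
      ext i j
      simp only [Matrix.map_apply, Matrix.of_apply, Matrix.mul_apply, Matrix.transpose_apply,
        Matrix.submatrix_apply, id_eq, hA]
      rw [trace_eq_sum_automorphisms]
      rw [← e.sum_comp]
      refine Finset.sum_congr rfl fun k _ => ?_
      rw [map_mul, hπ k]
      rfl
    rw [RingHom.map_det, RingHom.mapMatrix_apply, hmap, Matrix.det_mul, Matrix.det_transpose, Matrix.det_permute' π A,
      show Equiv.Perm.sign π = Equiv.Perm.sign (Equiv.mulRight g) from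
        Equiv.Perm.sign_permCongr _ _, ← hd]
    push_cast
    ring
  have hd0 : d ≠ 0 := by
    have h1 := key 1
    have hsign1 : Equiv.mulRight (1 : E ≃ₐ[F] E) = 1 := by ext x; simp
    rw [hsign1] at h1
    simp only [Equiv.Perm.sign_one, Units.val_one, Int.cast_one, one_mul] at h1
    have hdisc : Algebra.discr F b ≠ 0 := Algebra.discr_not_zero_of_basis F b
    intro h0
    apply hdisc
    have hmap0 : algebraMap F E (Algebra.discr F b) = 0 := by
      rw [Algebra.discr_def]
      have heq : Algebra.traceMatrix F b = Matrix.of fun i j : Fin n =>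
          Algebra.trace F E (b i * (1 : E ≃ₐ[F] E) (b j)) := by
        ext i j
        simp [Algebra.traceMatrix_apply, Algebra.traceForm_apply]
      rw [heq, h1, h0]
      ring
    exact (map_eq_zero_iff _ (algebraMap F E).injective).mp hmap0
  have hsφ : ((Equiv.Perm.sign (Equiv.mulRight φ) : ℤ)) = (-1 : ℤ) ^ (n + 1) := by
    rw [sign_mulRight_gen φ hgen, hcardGal]
  have hdq1 : d ^ (q - 1) = (-1 : E) ^ (n + 1) := by
    have hcomm : ∀ g : E ≃ₐ[F] E, φ * g = g * φ := fun g => by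
      obtain ⟨k, rfl⟩ := hgen g
      rw [← pow_succ, ← pow_succ']
    set ρ : Equiv.Perm (Fin n) := e.symm.permCongr (Equiv.mulRight φ) with hρdef
    have hρ : ∀ k, e (ρ k) = e k * φ := fun k => by simp [hρdef, Equiv.permCongr_apply]
    have hφd : φ d = ((Equiv.Perm.sign ρ : ℤ) : E) * d := by
      have h1 : φ d = (A.map φ).det := by
        rw [hd]
        exact RingHom.map_det (φ : E →+* E) A
      have h2 : A.map φ = A.submatrix id ρ := by
        ext i j
        simp only [Matrix.map_apply, Matrix.submatrix_apply, id_eq, hA, Matrix.of_apply]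
        rw [hρ j, ← hcomm (e j)]
        rfl
      rw [h1, h2, Matrix.det_permute', ← hd]
    have hdq : d ^ q = (-1 : E) ^ (n + 1) * d := by
      rw [← hφ d, hφd,
        show Equiv.Perm.sign ρ = Equiv.Perm.sign (Equiv.mulRight φ) from
          Equiv.Perm.sign_permCongr _ _]
      congr 1
      rw [show (((Equiv.Perm.sign (Equiv.mulRight φ) : ℤ)) : E)
          = (((-1 : ℤ) ^ (n + 1) : ℤ) : E) from congrArg _ hsφ]
      push_cast
      ring
    have hcancel : d ^ (q - 1) * d = (-1 : E) ^ (n + 1) * d := by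
      rw [← pow_succ, show q - 1 + 1 = q by omega, hdq]
    exact mul_right_cancel₀ hd0 hcancel
  set sτ : ℤ := (Equiv.Perm.sign (Equiv.mulRight τ) : ℤ) with hsτdef
  have hsτ1 : sτ = 1 ∨ sτ = -1 := Int.isUnit_iff.mp (Equiv.Perm.sign (Equiv.mulRight τ)).isUnit
  have hΔE : algebraMap F E Δ = (sτ : E) * d ^ 2 := by rw [hΔ]; exact key τ
  have hΔ0 : Δ ≠ 0 := by
    intro h0
    rw [h0, map_zero] at hΔE
    have hsne : ((sτ : ℤ) : E) ≠ 0 := by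
      rcases hsτ1 with h | h <;> rw [h] <;> simp
    have hd00 : d = 0 := by
      have := (mul_eq_zero.mp hΔE.symm).resolve_left hsne
      exact pow_eq_zero_iff (n := 2) (by norm_num) |>.mp this
    exact hd0 hd00
  have h2q : 2 * (q / 2) = q - 1 := by obtain ⟨t, ht⟩ := hqodd; omega
  have hcrit : IsSquare Δ ↔ (sτ : E) ^ (q / 2) * (-1 : E) ^ (n + 1) = 1 := by
    rw [FiniteField.isSquare_iff hcharF2 hΔ0]
    rw [← (algebraMap F E).injective.eq_iff, map_pow, map_one, hΔE, mul_pow, ← pow_mul,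
      ← hq, h2q, hdq1]
  rw [hsgnF Δ hΔ0, hsgnGal τ]
  by_cases hsq : IsSquare τ
  · have hsτeq : sτ = 1 := by
      obtain ⟨h, hh⟩ := hsq
      have hmr : Equiv.mulRight τ = (Equiv.mulRight h) ^ 2 := by
        rw [hh, ← sq, ← mulRight_pow_eq, sq]
      rw [hsτdef, hmr, map_pow, Int.units_sq, Units.val_one]
    rw [if_pos hsq]
    rw [hsτeq] at hcrit
    simp only [Int.cast_one, one_pow, one_mul] at hcrit
    rw [show ((1 : ℤ) : F) = 1 by norm_num, hsgnF 1 one_ne_zero, if_pos IsSquare.one]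
    rcases Nat.even_or_odd n with hev | hodd
    · have hns : ¬ IsSquare Δ := by
        rw [hcrit, (hev.add_one).neg_one_pow]
        exact hne11
      rw [if_neg hns, (hev.add_one).neg_one_pow]
    · have hs : IsSquare Δ := hcrit.mpr (hodd.add_one).neg_one_pow
      rw [if_pos hs, (hodd.add_one).neg_one_pow]
  · obtain ⟨k, hk⟩ := hgen τ
    have hkodd : Odd k := by
      rcases Nat.even_or_odd k with ⟨m, hm⟩ | h
      · exact absurd ⟨φ ^ m, by rw [hk, hm, pow_add]⟩ hsq
      · exact h
    have hnev : Even n := by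
      by_contra hne
      have hnodd : Odd n := Nat.not_even_iff_odd.mp hne
      obtain ⟨m, hm⟩ : Even (k + n) := hkodd.add_odd hnodd
      exact hsq ⟨φ ^ m, by rw [hk, ← mul_one (φ ^ k), ← hφn, ← pow_add, hm, pow_add]⟩
    have hsτeq : sτ = -1 := by
      rw [hsτdef, hk, mulRight_pow_eq, map_pow]
      push_cast
      rw [hsφ, ← pow_mul]
      exact Odd.neg_one_pow ((hnev.add_one).mul hkodd)
    rw [if_neg hsq]
    rw [hsτeq] at hcrit
    rw [show ((-1 : ℤ) : E) = -1 by norm_num] at hcrit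
    rw [(hnev.add_one).neg_one_pow] at hcrit
    rw [show ((-1 : ℤ) : F) = -1 by norm_num,
      hsgnF (-1) (neg_ne_zero.mpr one_ne_zero)]
    have hsqm1 : IsSquare (-1 : F) ↔ (-1 : F) ^ (q / 2) = 1 :=
      FiniteField.isSquare_iff hcharF2 (neg_ne_zero.mpr one_ne_zero)
    rcases Nat.even_or_odd (q / 2) with hev | hodd
    · have hΔns : ¬ IsSquare Δ := by
        rw [hcrit, hev.neg_one_pow, one_mul]
        intro h
        exact hne11 h
      rw [if_neg hΔns, if_pos (hsqm1.mpr hev.neg_one_pow)]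
      rw [(hnev.add_one).neg_one_pow]
    · have hΔs : IsSquare Δ := by
        rw [hcrit, hodd.neg_one_pow]
        ring
      have hns : ¬ IsSquare (-1 : F) := by
        rw [hsqm1, hodd.neg_one_pow]
        exact hne11F
      rw [if_pos hΔs, if_neg hns]
      norm_num
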